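/- Thermodynamical bound on ergotropy: for a density matrix ρ with S(ρ) = S(ω_β̄), the maximal extractable work W_max := tr(ρH) − min_U tr(UρU†H) satisfies W_max ≤ tr(ρH) − tr(ω_β̄ H). -/

import Mathlib

open Matrix BigOperators
open scoped Classical ComplexOrder

noncomputable section

def energy {ι : Type*} [Fintype ι] (H ρ : Matrix ι ι ℂ) : ℝ :=
  (Matrix.trace (ρ * H)).re

def IsDensity {ι : Type*} [Fintype ι] [DecidableEq ι] (ρ : Matrix ι ι ℂ) : Prop :=
  ρ.PosSemidef ∧ ρ.trace = 1

def IsPassive {ι : Type*} [Fintype ι] [DecidableEq ι] (H σ : Matrix ι ι ℂ) : Prop :=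
  ∀ U ∈ Matrix.unitaryGroup ι ℂ, energy H σ ≤ energy H (U * σ * star U)

def vnEntropy {ι : Type*} [Fintype ι] [DecidableEq ι] (ρ : Matrix ι ι ℂ) : ℝ :=
  if h : ρ.IsHermitian then ∑ i, Real.negMulLog (h.eigenvalues i) else 0

def gibbs {ι : Type*} [Fintype ι] [DecidableEq ι] (H : Matrix ι ι ℂ) (β : ℝ) :
    Matrix ι ι ℂ :=
  (Matrix.trace (NormedSpace.exp ((-β : ℂ) • H)))⁻¹ • NormedSpace.exp ((-β : ℂ) • H)

def tensPow {d : ℕ} (n : ℕ) (ρ : Matrix (Fin d) (Fin d) ℂ) :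
    Matrix (Fin n → Fin d) (Fin n → Fin d) ℂ :=
  Matrix.of fun i j => ∏ m, ρ (i m) (j m)

def sumHam {d : ℕ} (n : ℕ) (H : Matrix (Fin d) (Fin d) ℂ) :
    Matrix (Fin n → Fin d) (Fin n → Fin d) ℂ :=
  Matrix.of fun i j => ∑ m, H (i m) (j m) * ∏ l ∈ Finset.univ.erase m, (if i l = j l then (1:ℂ) else 0)

/-! ### Auxiliary lemmas -/

lemma aux_charpoly_conj {ι : Type*} [Fintype ι] [DecidableEq ι]
    (V A : Matrix ι ι ℂ) (hV : V ∈ Matrix.unitaryGroup ι ℂ) :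
    (V * A * star V).charpoly = A.charpoly := by
  have h2 : V * star V = 1 := Matrix.mem_unitaryGroup_iff.mp hV
  have hmap : ∀ (M N : Matrix ι ι ℂ),
      (Polynomial.C : ℂ →+* (Polynomial ℂ)).mapMatrix (M * N)
      = (Polynomial.C : ℂ →+* (Polynomial ℂ)).mapMatrix M
        * (Polynomial.C : ℂ →+* (Polynomial ℂ)).mapMatrix N := by
    intro M N; exact map_mul _ _ _
  have hcomm : Commute (Matrix.scalar ι (Polynomial.X : Polynomial ℂ))
      ((Polynomial.C : ℂ →+* (Polynomial ℂ)).mapMatrix V) :=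
    Matrix.scalar_commute _ (fun r' => Commute.all _ _) _
  have key : charmatrix (V * A * star V) =
      (Polynomial.C : ℂ →+* (Polynomial ℂ)).mapMatrix V * charmatrix A
        * (Polynomial.C : ℂ →+* (Polynomial ℂ)).mapMatrix (star V) := by
    unfold charmatrix
    rw [Matrix.mul_sub, Matrix.sub_mul, hmap, hmap]
    congr 1
    rw [← hcomm.eq, mul_assoc, ← hmap, h2, _root_.map_one, mul_one]
  have hdet1 : ((Polynomial.C : ℂ →+* (Polynomial ℂ)).mapMatrix V).det
      * ((Polynomial.C : ℂ →+* (Polynomial ℂ)).mapMatrix (star V)).det = 1 := by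
    rw [← Matrix.det_mul, ← hmap, h2, _root_.map_one, Matrix.det_one]
  unfold Matrix.charpoly
  rw [key, Matrix.det_mul, Matrix.det_mul]
  ring_nf
  rw [mul_comm, ← mul_assoc]
  rw [mul_comm (((Polynomial.C : ℂ →+* (Polynomial ℂ)).mapMatrix (star V)).det)]
  rw [hdet1, one_mul]

lemma aux_roots_charpoly_diagonal {ι : Type*} [Fintype ι] [DecidableEq ι] (v : ι → ℂ) :
    (Matrix.diagonal v).charpoly.roots = Finset.univ.val.map v := by
  have h : (Matrix.diagonal v).charpoly
      = ((Finset.univ.val.map v).map (fun a => Polynomial.X - Polynomial.C a)).prod := by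
    unfold Matrix.charpoly charmatrix
    have h0 : Matrix.scalar ι (Polynomial.X : Polynomial ℂ)
        - (Polynomial.C : ℂ →+* (Polynomial ℂ)).mapMatrix (Matrix.diagonal v)
        = Matrix.diagonal (fun i => Polynomial.X - Polynomial.C (v i)) := by
      rw [Matrix.scalar_apply]
      ext i j
      by_cases hij : i = j <;>
        simp [hij, Matrix.diagonal_apply, RingHom.mapMatrix_apply, Matrix.map_apply]
    rw [h0, Matrix.det_diagonal, Finset.prod_eq_multiset_prod, Multiset.map_map]
    rfl
  rw [h, Polynomial.roots_multiset_prod_X_sub_C]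

lemma aux_eig_sum_conj {ι : Type*} [Fintype ι] [DecidableEq ι]
    {A : Matrix ι ι ℂ} (hA : A.IsHermitian) {V : Matrix ι ι ℂ}
    (hV : V ∈ Matrix.unitaryGroup ι ℂ) (q : ι → ℝ)
    (hd : A = V * Matrix.diagonal (fun i => (q i : ℂ)) * star V) (f : ℝ → ℝ) :
    ∑ i, f (hA.eigenvalues i) = ∑ i, f (q i) := by
  have hmult : Finset.univ.val.map (fun i => ((hA.eigenvalues i : ℝ) : ℂ))
      = Finset.univ.val.map (fun i => ((q i : ℝ) : ℂ)) := by
    have h1 : A.charpoly = (Matrix.diagonal (fun i => ((hA.eigenvalues i : ℝ) : ℂ))).charpoly := by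
      conv_lhs => rw [hA.spectral_theorem]
      exact aux_charpoly_conj _ _ hA.eigenvectorUnitary.2
    have h2 : A.charpoly = (Matrix.diagonal (fun i => ((q i : ℝ) : ℂ))).charpoly := by
      conv_lhs => rw [hd]
      exact aux_charpoly_conj _ _ hV
    have h3 := congrArg Polynomial.roots (h1.symm.trans h2)
    rwa [aux_roots_charpoly_diagonal, aux_roots_charpoly_diagonal] at h3
  have h4 := congrArg (fun m : Multiset ℂ => (m.map (fun z => f z.re)).sum) hmult
  simp only [Multiset.map_map, Function.comp] at h4
  rw [Finset.sum_eq_multiset_sum, Finset.sum_eq_multiset_sum]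
  simpa using h4

lemma aux_pair_ineq (p c q : ℝ) (hp : 0 ≤ p) (hc : 0 ≤ c) (hq : 0 < q) :
    p * c - c * q ≤ p * c * Real.log p - p * c * Real.log q := by
  rcases eq_or_lt_of_le hc with rfl | hc
  · simp
  rcases eq_or_lt_of_le hp with rfl | hp
  · simp; positivity
  have h1 : Real.log (q / p) ≤ q / p - 1 := Real.log_le_sub_one_of_pos (by positivity)
  rw [Real.log_div hq.ne' hp.ne'] at h1
  have h2 : p * (q / p) = q := mul_div_cancel₀ _ hp.ne'
  have h3 := mul_le_mul_of_nonneg_left h1 (le_of_lt (mul_pos hp hc))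
  nlinarith [mul_pos hp hc]

lemma aux_gibbs_ineq {d : ℕ} (p q : Fin d → ℝ) (c : Fin d → Fin d → ℝ)
    (hp : ∀ i, 0 ≤ p i) (hq : ∀ j, 0 < q j) (hc : ∀ i j, 0 ≤ c i j)
    (hrow : ∀ i, ∑ j, c i j = 1) (hcol : ∀ j, ∑ i, c i j = 1)
    (hp1 : ∑ i, p i = 1) (hq1 : ∑ j, q j = 1) :
    ∑ i, Real.negMulLog (p i) ≤ ∑ i, ∑ j, p i * c i j * (-(Real.log (q j))) := by
  have pair : ∀ i j, p i * c i j - c i j * q j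
      ≤ p i * c i j * Real.log (p i) - p i * c i j * Real.log (q j) :=
    fun i j => aux_pair_ineq _ _ _ (hp i) (hc i j) (hq j)
  have hsum := Finset.sum_le_sum (fun i (_ : i ∈ Finset.univ) =>
    Finset.sum_le_sum (fun j (_ : j ∈ Finset.univ) => pair i j))
  have epc : ∑ i : Fin d, ∑ j : Fin d, p i * c i j = 1 := by
    rw [← hp1]
    refine Finset.sum_congr rfl fun i _ => ?_
    rw [← Finset.mul_sum, hrow i, mul_one]
  have ecq : ∑ i : Fin d, ∑ j : Fin d, c i j * q j = 1 := by
    rw [Finset.sum_comm, ← hq1]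
    refine Finset.sum_congr rfl fun j _ => ?_
    rw [← Finset.sum_mul, hcol j, one_mul]
  have e1 : ∑ i : Fin d, ∑ j : Fin d, (p i * c i j - c i j * q j) = 0 := by
    simp only [Finset.sum_sub_distrib]
    rw [epc, ecq, sub_self]
  have hplog : ∀ i, ∑ j : Fin d, p i * c i j * Real.log (p i) = p i * Real.log (p i) := by
    intro i
    calc ∑ j : Fin d, p i * c i j * Real.log (p i)
        = (p i * Real.log (p i)) * ∑ j : Fin d, c i j := by
          rw [Finset.mul_sum]; exact Finset.sum_congr rfl fun j _ => by ring
      _ = p i * Real.log (p i) := by rw [hrow i, mul_one]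
  have e2 : ∑ i : Fin d, ∑ j : Fin d,
      (p i * c i j * Real.log (p i) - p i * c i j * Real.log (q j))
      = (∑ i, p i * Real.log (p i))
        - ∑ i : Fin d, ∑ j : Fin d, p i * c i j * Real.log (q j) := by
    simp only [Finset.sum_sub_distrib]
    congr 1
    exact Finset.sum_congr rfl fun i _ => hplog i
  have e3 : ∑ i, Real.negMulLog (p i) = -∑ i, p i * Real.log (p i) := by
    simp [Real.negMulLog]
  have e4 : ∑ i : Fin d, ∑ j : Fin d, p i * c i j * (-(Real.log (q j)))
      = -∑ i : Fin d, ∑ j : Fin d, p i * c i j * Real.log (q j) := by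
    simp
  rw [e1, e2] at hsum
  rw [e3, e4]
  linarith

lemma aux_re_term (z : ℂ) (e pp : ℝ) : (star z * ↑e * z * ↑pp).re = pp * Complex.normSq z * e := by
  have h : star z * (↑e : ℂ) * z * ↑pp = ((↑e : ℂ) * ↑pp) * (star z * z) := by ring
  rw [h, Complex.star_def, ← Complex.normSq_eq_conj_mul_self,
    ← Complex.ofReal_mul, ← Complex.ofReal_mul, Complex.ofReal_re]
  ring

lemma aux_energy_conj_diag {d : ℕ} (H : Matrix (Fin d) (Fin d) ℂ) (hH : H.IsHermitian)
    (W : Matrix (Fin d) (Fin d) ℂ) (p : Fin d → ℝ) :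
    energy H (W * Matrix.diagonal (fun i => (p i : ℂ)) * star W)
      = ∑ i, ∑ j, p i
          * Complex.normSq ((star (hH.eigenvectorUnitary : Matrix (Fin d) (Fin d) ℂ) * W) j i)
          * hH.eigenvalues j := by
  set V : Matrix (Fin d) (Fin d) ℂ := (hH.eigenvectorUnitary : Matrix (Fin d) (Fin d) ℂ) with hVdef
  set M : Matrix (Fin d) (Fin d) ℂ := star V * W with hMdef
  set D : Matrix (Fin d) (Fin d) ℂ := Matrix.diagonal (fun i => (p i : ℂ)) with hDdef
  set DE : Matrix (Fin d) (Fin d) ℂ := Matrix.diagonal (RCLike.ofReal ∘ hH.eigenvalues) with hDEdef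
  have htr : Matrix.trace ((W * D * star W) * H) = Matrix.trace ((star W * H * W) * D) := by
    rw [show (W * D * star W) * H = (W * D) * (star W * H) by simp only [Matrix.mul_assoc],
      Matrix.trace_mul_comm, show (star W * H) * (W * D) = (star W * H * W) * D by
        simp only [Matrix.mul_assoc]]
  have hB : star W * H * W = star M * DE * M := by
    rw [hMdef, Matrix.star_mul, star_star]
    conv_lhs => rw [hH.spectral_theorem, Unitary.conjStarAlgAut_apply]
    simp only [Matrix.mul_assoc, hDEdef, hVdef, Unitary.coe_star]
  unfold energy
  rw [htr, hB, Matrix.trace, Complex.re_sum]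
  refine Finset.sum_congr rfl fun i _ => ?_
  rw [Matrix.diag_apply, Matrix.mul_diagonal, Matrix.mul_apply, Finset.sum_mul, Complex.re_sum]
  refine Finset.sum_congr rfl fun j _ => ?_
  rw [Matrix.mul_diagonal, Matrix.star_apply]
  exact aux_re_term _ _ _

theorem ergotropy_thermo_bound {d : ℕ} (H ρ : Matrix (Fin d) (Fin d) ℂ)
    (hH : H.IsHermitian) (hsimple : Function.Injective hH.eigenvalues)
    (hρ : IsDensity ρ) (β : ℝ) (hβ : 0 < β)
    (hS : vnEntropy (gibbs H β) = vnEntropy ρ) :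
    energy H ρ -
        sInf {x : ℝ | ∃ U ∈ Matrix.unitaryGroup (Fin d) ℂ, x = energy H (U * ρ * star U)} ≤
      energy H ρ - energy H (gibbs H β) := by
  classical
  rcases Nat.eq_zero_or_pos d with hd | hd
  · exfalso
    have h1 := hρ.2
    subst hd
    simp [Matrix.trace] at h1
  haveI : Nonempty (Fin d) := ⟨⟨0, hd⟩⟩
  set V : Matrix (Fin d) (Fin d) ℂ := (hH.eigenvectorUnitary : Matrix (Fin d) (Fin d) ℂ)
    with hVdef
  have hV : V ∈ Matrix.unitaryGroup (Fin d) ℂ := hH.eigenvectorUnitary.2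
  set E : Fin d → ℝ := hH.eigenvalues with hEdef
  set Z : ℝ := ∑ i, Real.exp (-(β * E i)) with hZdef
  have hZpos : 0 < Z := Finset.sum_pos (fun i _ => Real.exp_pos _) Finset.univ_nonempty
  set q : Fin d → ℝ := fun i => Real.exp (-(β * E i)) / Z with hqdef
  have hqpos : ∀ i, 0 < q i := fun i => div_pos (Real.exp_pos _) hZpos
  have hq1 : ∑ i, q i = 1 := by
    rw [hqdef, ← Finset.sum_div, ← hZdef, div_self hZpos.ne']
  have hlogq : ∀ i, Real.log (q i) = -(β * E i) - Real.log Z := by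
    intro i
    rw [hqdef, Real.log_div (Real.exp_ne_zero _) hZpos.ne', Real.log_exp]
  have hV1 : star V * V = 1 := Matrix.mem_unitaryGroup_iff'.mp hV
  have hV2 : V * star V = 1 := Matrix.mem_unitaryGroup_iff.mp hV
  have hVunit : IsUnit V := ⟨⟨V, star V, hV2, hV1⟩, rfl⟩
  have hVinv : V⁻¹ = star V := Matrix.inv_eq_left_inv hV1
  have hsmul : (-β : ℂ) • H = V * Matrix.diagonal (fun i => ((-(β * E i) : ℝ) : ℂ)) * star V := by
    have hfd : ((-β : ℂ) • (RCLike.ofReal ∘ hH.eigenvalues) : Fin d → ℂ)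
        = fun i => ((-(β * E i) : ℝ) : ℂ) := by
      funext i
      simp only [Pi.smul_apply, Function.comp_apply, smul_eq_mul, hEdef]
      push_cast
      rw [neg_mul]
      rfl
    conv_lhs => rw [hH.spectral_theorem, Unitary.conjStarAlgAut_apply]
    rw [← Matrix.smul_mul, ← Matrix.mul_smul, ← Matrix.diagonal_smul, hfd]
  have hexp : NormedSpace.exp ((-β : ℂ) • H)
      = V * Matrix.diagonal (fun i => ((Real.exp (-(β * E i)) : ℝ) : ℂ)) * star V := by
    have hfe : NormedSpace.exp (fun i : Fin d => ((-(β * E i) : ℝ) : ℂ))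
        = fun i => ((Real.exp (-(β * E i)) : ℝ) : ℂ) := by
      rw [Pi.exp_def]
      funext i
      rw [← Complex.exp_eq_exp_ℂ]
      exact (Complex.ofReal_exp _).symm
    rw [hsmul, ← hVinv, Matrix.exp_conj V _ hVunit, Matrix.exp_diagonal, hVinv, hfe]
  have htrexp : Matrix.trace (NormedSpace.exp ((-β : ℂ) • H)) = (Z : ℂ) := by
    rw [hexp, show V * Matrix.diagonal (fun i => ((Real.exp (-(β * E i)) : ℝ) : ℂ)) * star V
        = V * (Matrix.diagonal (fun i => ((Real.exp (-(β * E i)) : ℝ) : ℂ)) * star V) by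
      simp only [Matrix.mul_assoc], Matrix.trace_mul_comm, Matrix.mul_assoc, hV1, mul_one,
      Matrix.trace_diagonal, hZdef]
    push_cast
    rfl
  have hgibbs : gibbs H β = V * Matrix.diagonal (fun i => ((q i : ℝ) : ℂ)) * star V := by
    unfold gibbs
    have hfq : ((Z : ℂ)⁻¹ • fun i : Fin d => ((Real.exp (-(β * E i)) : ℝ) : ℂ))
        = fun i => ((q i : ℝ) : ℂ) := by
      funext i
      simp only [Pi.smul_apply, smul_eq_mul, hqdef]
      rw [div_eq_inv_mul]
      push_cast
      ring
    rw [htrexp, hexp, ← Matrix.smul_mul, ← Matrix.mul_smul, ← Matrix.diagonal_smul, hfq]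
  have hG : (gibbs H β).IsHermitian := by
    rw [hgibbs]
    unfold Matrix.IsHermitian
    rw [Matrix.conjTranspose_mul, Matrix.conjTranspose_mul, Matrix.diagonal_conjTranspose]
    simp only [Matrix.conjTranspose_conjTranspose, ← Matrix.star_eq_conjTranspose, star_star]
    rw [show star (fun i => ((q i : ℝ) : ℂ)) = fun i => ((q i : ℝ) : ℂ) by
      funext i; simp [Pi.star_apply, Complex.star_def, Complex.conj_ofReal]]
    simp only [Matrix.mul_assoc]
  have hSg : vnEntropy (gibbs H β) = ∑ i, Real.negMulLog (q i) := by
    unfold vnEntropy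
    rw [dif_pos hG]
    exact aux_eig_sum_conj hG hV q hgibbs Real.negMulLog
  have hρH : ρ.IsHermitian := hρ.1.1
  set Wρ : Matrix (Fin d) (Fin d) ℂ := (hρH.eigenvectorUnitary : Matrix (Fin d) (Fin d) ℂ)
    with hWdef
  have hWρ : Wρ ∈ Matrix.unitaryGroup (Fin d) ℂ := hρH.eigenvectorUnitary.2
  set pr : Fin d → ℝ := hρH.eigenvalues with hprdef
  have hρdec : ρ = Wρ * Matrix.diagonal (fun i => ((pr i : ℝ) : ℂ)) * star Wρ :=
    hρH.spectral_theorem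
  have hpr0 : ∀ i, 0 ≤ pr i := fun i => hρ.1.eigenvalues_nonneg i
  have hpr1 : ∑ i, pr i = 1 := by
    have h5 : Matrix.trace ρ = (↑(∑ i, pr i) : ℂ) := by
      rw [hρdec, show Wρ * Matrix.diagonal (fun i => ((pr i : ℝ) : ℂ)) * star Wρ
          = Wρ * (Matrix.diagonal (fun i => ((pr i : ℝ) : ℂ)) * star Wρ) by
        simp only [Matrix.mul_assoc], Matrix.trace_mul_comm, Matrix.mul_assoc,
        Matrix.mem_unitaryGroup_iff'.mp hWρ, mul_one, Matrix.trace_diagonal]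
      push_cast
      rfl
    rw [hρ.2] at h5
    exact_mod_cast h5.symm
  have hSρ : vnEntropy ρ = ∑ i, Real.negMulLog (pr i) := by
    unfold vnEntropy
    rw [dif_pos hρH]
  have hEg : energy H (gibbs H β) = ∑ i, q i * E i := by
    rw [hgibbs, aux_energy_conj_diag H hH V q, hV1]
    refine Finset.sum_congr rfl fun i _ => ?_
    rw [Finset.sum_eq_single i]
    · simp [Matrix.one_apply, hEdef]
    · intro j _ hji
      simp [Matrix.one_apply, hji]
    · simp
  have hkey : vnEntropy (gibbs H β) = β * energy H (gibbs H β) + Real.log Z := by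
    rw [hSg, hEg]
    have h6 : ∀ i, Real.negMulLog (q i) = β * (q i * E i) + q i * Real.log Z := by
      intro i
      rw [Real.negMulLog, hlogq i]
      ring
    rw [Finset.sum_congr rfl fun i _ => h6 i, Finset.sum_add_distrib, ← Finset.mul_sum,
      ← Finset.sum_mul, hq1, one_mul]
  have hlb : ∀ x ∈ {x : ℝ | ∃ U ∈ Matrix.unitaryGroup (Fin d) ℂ,
      x = energy H (U * ρ * star U)}, energy H (gibbs H β) ≤ x := by
    rintro x ⟨U, hU, rfl⟩
    have hW' : U * Wρ ∈ Matrix.unitaryGroup (Fin d) ℂ := mul_mem hU hWρ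
    have hσ : U * ρ * star U
        = (U * Wρ) * Matrix.diagonal (fun i => ((pr i : ℝ) : ℂ)) * star (U * Wρ) := by
      rw [hρdec, Matrix.star_mul]
      simp only [Matrix.mul_assoc]
    rw [hσ, aux_energy_conj_diag H hH _ pr]
    set M : Matrix (Fin d) (Fin d) ℂ := star V * (U * Wρ) with hMdef
    have hMu : M ∈ Matrix.unitaryGroup (Fin d) ℂ := mul_mem (Unitary.star_mem hV) hW'
    set c : Fin d → Fin d → ℝ := fun i j => Complex.normSq (M j i) with hcdef
    have hrow : ∀ i, ∑ j, c i j = 1 := by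
      intro i
      have h7 := congrFun (congrFun (Matrix.mem_unitaryGroup_iff'.mp hMu) i) i
      rw [Matrix.mul_apply] at h7
      have h8 : ∑ j, (star M) i j * M j i = ∑ j, ((Complex.normSq (M j i) : ℝ) : ℂ) := by
        refine Finset.sum_congr rfl fun j _ => ?_
        rw [Matrix.star_apply, Complex.star_def, ← Complex.normSq_eq_conj_mul_self]
      rw [h8] at h7
      have h9 := congrArg Complex.re h7
      rw [Complex.re_sum] at h9
      simpa [Matrix.one_apply, hcdef] using h9
    have hcol : ∀ j, ∑ i, c i j = 1 := by
      intro j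
      have h7 := congrFun (congrFun (Matrix.mem_unitaryGroup_iff.mp hMu) j) j
      rw [Matrix.mul_apply] at h7
      have h8 : ∑ i, M j i * (star M) i j = ∑ i, ((Complex.normSq (M j i) : ℝ) : ℂ) := by
        refine Finset.sum_congr rfl fun i _ => ?_
        rw [Matrix.star_apply, Complex.star_def, Complex.mul_conj]
      rw [h8] at h7
      have h9 := congrArg Complex.re h7
      rw [Complex.re_sum] at h9
      simpa [Matrix.one_apply, hcdef] using h9
    have hineq := aux_gibbs_ineq pr q c hpr0 hqpos
      (fun i j => Complex.normSq_nonneg _) hrow hcol hpr1 hq1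
    have hiden : ∑ i, ∑ j, pr i * c i j * (-(Real.log (q j)))
        = β * (∑ i, ∑ j, pr i * c i j * E j)
          + Real.log Z := by
      have h10 : ∀ i j, pr i * c i j * (-(Real.log (q j)))
          = β * (pr i * c i j * E j) + pr i * c i j * Real.log Z := by
        intro i j
        rw [hlogq j]
        ring
      rw [Finset.sum_congr rfl fun i _ => Finset.sum_congr rfl fun j _ => h10 i j]
      simp only [Finset.sum_add_distrib]
      congr 1
      · rw [Finset.mul_sum]
        refine Finset.sum_congr rfl fun i _ => ?_
        rw [Finset.mul_sum]
      · have h11 : ∀ i, ∑ j : Fin d, pr i * c i j * Real.log Z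
            = pr i * Real.log Z := by
          intro i
          calc ∑ j : Fin d, pr i * c i j * Real.log Z
              = (pr i * Real.log Z) * ∑ j : Fin d, c i j := by
                rw [Finset.mul_sum]; exact Finset.sum_congr rfl fun j _ => by ring
            _ = pr i * Real.log Z := by rw [hrow i, mul_one]
        rw [Finset.sum_congr rfl fun i _ => h11 i, ← Finset.sum_mul, hpr1, one_mul]
    have h12 : ∑ i, Real.negMulLog (pr i)
        ≤ β * (∑ i, ∑ j, pr i * c i j * E j) + Real.log Z := by
      rw [← hiden]; exact hineq
    have h13 : β * energy H (gibbs H β) + Real.log Z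
        ≤ β * (∑ i, ∑ j, pr i * c i j * E j) + Real.log Z := by
      rw [← hkey]
      rw [hS, hSρ]
      exact h12
    have h14 : energy H (gibbs H β) ≤ ∑ i, ∑ j, pr i * c i j * E j := by
      have := sub_le_sub_right h13 (Real.log Z)
      simp only [add_sub_cancel_right] at this
      exact (mul_le_mul_iff_right₀ hβ).mp this
    exact h14
  have hne : Set.Nonempty {x : ℝ | ∃ U ∈ Matrix.unitaryGroup (Fin d) ℂ,
      x = energy H (U * ρ * star U)} :=
    ⟨energy H (1 * ρ * star 1), 1, one_mem _, rfl⟩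
  exact sub_le_sub_left (le_csInf hne hlb) _
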